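/- Let μ be a finite signed Radon measure on ℝⁿ with ‖μ‖ < 1 and ∫ log⁺(1/|x₀−y|) d|μ|(y) < ∞ for a fixed x₀. Set μ_k = μ restricted to B(0,k) and L̃ν(x) = ∫ log(|x₀−y|/|x−y|) dν(y). Then for every ball B, ∫_B |e^{n·L̃μ_k(x)} − e^{n·L̃μ(x)}| dx → 0 as k → ∞. -/

import Mathlib

open Metric MeasureTheory Filter Set Topology

noncomputable section
section helpers


lemma logplus_le_rpow (t : ℝ) (ht : 0 ≤ t) {σ : ℝ} (hσ : 0 < σ) :
    max (Real.log (1/t)) 0 ≤ σ⁻¹ * t ^ (-σ) := by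
  rcases eq_or_lt_of_le ht with h0 | ht
  · simp only [← h0, one_div, inv_zero, Real.log_zero, max_self]
    positivity
  rcases le_or_gt 1 t with h1 | h1
  · have : Real.log (1/t) ≤ 0 := Real.log_nonpos (by positivity) (by
      rw [div_le_one ht]; exact h1)
    rw [max_eq_right this]
    positivity
  · have hlog : Real.log (1/t) = σ⁻¹ * Real.log ((1/t) ^ σ) := by
      rw [Real.log_rpow (by positivity), inv_mul_cancel_left₀ hσ.ne']
    have h2 : Real.log ((1/t)^σ) ≤ (1/t)^σ := (Real.log_le_sub_one_of_pos (by positivity)).trans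
      (by linarith)
    have h3 : (1/t : ℝ)^σ = t ^ (-σ) := by
      rw [one_div, Real.inv_rpow ht.le, ← Real.rpow_neg ht.le]
    rcases le_total (Real.log (1/t)) 0 with h|h
    · rw [max_eq_right h]; positivity
    · rw [max_eq_left h, hlog, ← h3]
      have := inv_nonneg.2 hσ.le
      nlinarith [Real.rpow_nonneg (show (0:ℝ) ≤ 1/t by positivity) σ]

lemma exp_logplus_le (t : ℝ) (ht : 0 ≤ t) {s : ℝ} (hs : 0 ≤ s) :
    Real.exp (s * max (Real.log (1/t)) 0) ≤ 1 + t ^ (-s) := by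
  rcases eq_or_lt_of_le ht with h0 | ht
  · simp only [← h0, one_div, inv_zero, Real.log_zero, max_self, mul_zero, Real.exp_zero]
    have : (0:ℝ) ≤ (0:ℝ) ^ (-s) := Real.rpow_nonneg le_rfl _
    linarith
  rcases le_or_gt 1 t with h1 | h1
  · have : Real.log (1/t) ≤ 0 := Real.log_nonpos (by positivity) (by rw [div_le_one ht]; exact h1)
    rw [max_eq_right this, mul_zero, Real.exp_zero]
    have : (0:ℝ) ≤ t ^ (-s) := Real.rpow_nonneg ht.le _
    linarith
  · have hpos : 0 ≤ Real.log (1/t) := Real.log_nonneg (by rw [le_div_iff₀ ht]; linarith)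
    rw [max_eq_left hpos, ← Real.log_rpow (by positivity), Real.exp_log (by positivity)]
    have : (1/t : ℝ)^s = t ^ (-s) := by
      rw [one_div, Real.inv_rpow ht.le, ← Real.rpow_neg ht.le]
    rw [this]; linarith

lemma log_div_le {a b d : ℝ} (ha : 0 ≤ a) (hb : 0 ≤ b) (hd : 0 ≤ d) (h : a ≤ b + d) :
    Real.log (a/b) ≤ Real.log (1+d) + Real.log 2 + max (Real.log (1/b)) 0 := by
  have h1d : (0:ℝ) ≤ Real.log (1+d) := Real.log_nonneg (by linarith)
  have h2 : (0:ℝ) ≤ Real.log 2 := Real.log_nonneg one_le_two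
  rcases eq_or_lt_of_le hb with hb0 | hb0
  · rw [← hb0, div_zero, Real.log_zero]
    positivity
  rcases eq_or_lt_of_le ha with ha0 | ha0
  · rw [← ha0, zero_div, Real.log_zero]; positivity
  have key : a / b ≤ (1+d) * (1 + 1/b) := by
    rw [div_le_iff₀ hb0]
    have hbne : b ≠ 0 := hb0.ne'
    have heq : (1+d) * (1+1/b) * b = (1+d)*(b+1) := by field_simp
    rw [heq]; nlinarith
  have : Real.log (a/b) ≤ Real.log (1+d) + Real.log (1 + 1/b) := by
    calc Real.log (a/b) ≤ Real.log ((1+d)*(1+1/b)) := Real.log_le_log (by positivity) key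
    _ = _ := Real.log_mul (by positivity) (by positivity)
  refine this.trans ?_
  have : Real.log (1 + 1/b) ≤ Real.log 2 + max (Real.log (1/b)) 0 := by
    rcases le_total (1/b) 1 with h'|h'
    · have : Real.log (1+1/b) ≤ Real.log 2 := Real.log_le_log (by positivity) (by linarith)
      have := le_max_right (Real.log (1/b)) 0
      linarith
    · have : Real.log (1+1/b) ≤ Real.log (2 * (1/b)) := Real.log_le_log (by positivity) (by linarith)
      rw [Real.log_mul two_ne_zero (by positivity)] at this
      have := le_max_left (Real.log (1/b)) 0
      linarith
  linarith

variable {n : ℕ}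
local notation "E" => EuclideanSpace ℝ (Fin n)


lemma lint_Ioi_rpow {p : ℝ} (hp : 1 < p) :
    ∫⁻ t in Ioi (1:ℝ), ENNReal.ofReal (t ^ (-p)) < ⊤ := by
  have h := integrableOn_Ioi_rpow_of_lt (show -p < -1 by linarith) one_pos
  have h2 := h.2
  refine lt_of_le_of_lt (le_of_eq ?_) h2
  refine setLIntegral_congr_fun measurableSet_Ioi (fun t ht => ?_)
  rw [← ofReal_norm_eq_enorm,
    Real.norm_of_nonneg (Real.rpow_nonneg (le_of_lt (lt_trans one_pos ht)) _)]

lemma finite_rpow_ball (hn : 1 ≤ n) {s : ℝ} (hs : 0 < s) (hsn : s < n) :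
    ∫⁻ x in ball (0 : E) 1, ENNReal.ofReal (‖x‖ ^ (-s)) ∂volume < ⊤ := by
  set μ := volume.restrict (ball (0 : E) 1) with hμ
  have h_meas : Measurable fun x : E => ‖x‖ ^ (-s) := by fun_prop
  have h_nn : 0 ≤ᵐ[μ] fun x : E => ‖x‖ ^ (-s) :=
    ae_of_all _ fun x => Real.rpow_nonneg (norm_nonneg x) _
  rw [show (∫⁻ x in ball (0 : E) 1, ENNReal.ofReal (‖x‖ ^ (-s)) ∂volume)
      = ∫⁻ x, ENNReal.ofReal (‖x‖ ^ (-s)) ∂μ from rfl,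
    lintegral_eq_lintegral_meas_le μ h_nn h_meas.aemeasurable]
  have hsub : ∀ t : ℝ, 0 < t → {a : E | t ≤ ‖a‖ ^ (-s)} ⊆ closedBall 0 (t ^ (-s⁻¹)) := by
    intro t ht a ha
    simp only [mem_setOf_eq] at ha
    have ha0 : a ≠ 0 := by
      rintro rfl
      simp only [norm_zero] at ha
      rw [Real.zero_rpow (by linarith : -s ≠ 0)] at ha
      linarith
    have hna : 0 < ‖a‖ := norm_pos_iff.2 ha0
    rw [mem_closedBall_zero_iff]
    calc ‖a‖ = (‖a‖ ^ (-s)) ^ (-s⁻¹) := by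
          rw [← Real.rpow_mul hna.le, neg_mul_neg, mul_inv_cancel₀ hs.ne', Real.rpow_one]
    _ ≤ t ^ (-s⁻¹) := Real.rpow_le_rpow_of_nonpos ht ha (neg_nonpos.2 (inv_nonneg.2 hs.le))
  have key : ∀ t : ℝ, 0 < t → μ {a : E | t ≤ ‖a‖ ^ (-s)}
      ≤ min (volume (ball (0:E) 1)) (ENNReal.ofReal ((t ^ (-s⁻¹)) ^ n) * volume (ball (0:E) 1)) := by
    intro t ht
    refine le_min ?_ ?_
    · calc μ _ ≤ μ univ := measure_mono (subset_univ _)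
      _ = volume (ball (0:E) 1) := by rw [hμ, Measure.restrict_apply_univ]
    · calc μ _ ≤ volume (closedBall (0:E) (t ^ (-s⁻¹))) :=
          le_trans (Measure.restrict_apply_le _ _) (measure_mono (hsub t ht))
      _ = _ := by
          rw [Measure.addHaar_closedBall _ _ (Real.rpow_nonneg ht.le _),
            finrank_euclideanSpace_fin]
  have hb : volume (ball (0:E) 1) < ⊤ := measure_ball_lt_top
  calc ∫⁻ t in Ioi 0, μ {a : E | t ≤ ‖a‖ ^ (-s)}
      ≤ ∫⁻ t in Ioc 0 1 ∪ Ioi 1, μ {a : E | t ≤ ‖a‖ ^ (-s)} :=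
        lintegral_mono_set Ioi_subset_Ioc_union_Ioi
    _ ≤ (∫⁻ t in Ioc 0 1, μ {a : E | t ≤ ‖a‖ ^ (-s)}) + ∫⁻ t in Ioi 1, μ {a : E | t ≤ ‖a‖ ^ (-s)} :=
        lintegral_union_le _ _ _
    _ < ⊤ := by
        refine ENNReal.add_lt_top.2 ⟨?_, ?_⟩
        · calc (∫⁻ t in Ioc 0 1, μ {a : E | t ≤ ‖a‖ ^ (-s)})
              ≤ ∫⁻ _t in Ioc (0:ℝ) 1, volume (ball (0:E) 1) := by
                refine setLIntegral_mono' measurableSet_Ioc fun t ht => ?_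
                exact ((key t ht.1).trans (min_le_left _ _))
          _ = volume (ball (0:E) 1) * volume (Ioc (0:ℝ) 1) := by
                rw [setLIntegral_const]
          _ < ⊤ := by
                refine ENNReal.mul_lt_top hb ?_
                simp [Real.volume_Ioc]
        · have hcast : (1:ℝ) ≤ (n:ℝ) := by exact_mod_cast hn
          calc (∫⁻ t in Ioi 1, μ {a : E | t ≤ ‖a‖ ^ (-s)})
              ≤ ∫⁻ t in Ioi (1:ℝ), ENNReal.ofReal (t ^ (-(n/s))) * volume (ball (0:E) 1) := by
                refine setLIntegral_mono' measurableSet_Ioi fun t ht => ?_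
                have htp : (0:ℝ) < t := lt_trans one_pos ht
                refine ((key t htp).trans (min_le_right _ _)).trans ?_
                refine mul_le_mul_left (le_of_eq ?_) _
                congr 1
                rw [← Real.rpow_natCast (t ^ (-s⁻¹)) n, ← Real.rpow_mul htp.le]
                congr 1
                field_simp
          _ = (∫⁻ t in Ioi (1:ℝ), ENNReal.ofReal (t ^ (-(n/s)))) * volume (ball (0:E) 1) := by
                rw [lintegral_mul_const' _ _ hb.ne]
          _ < ⊤ := ENNReal.mul_lt_top (lint_Ioi_rpow (by
                rw [lt_div_iff₀ hs]; linarith)) hb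


lemma uniform_rpow_ball (hn : 1 ≤ n) {s : ℝ} (hs0 : 0 ≤ s) (hsn : s < n) (z : E) (r : ℝ) :
    ∃ C : ENNReal, C ≠ ⊤ ∧ ∀ y : E,
      ∫⁻ x in ball z r, ENNReal.ofReal (‖x - y‖ ^ (-s)) ∂volume ≤ C := by
  have hC2 : (∫⁻ x in ball (0 : E) 1, ENNReal.ofReal (‖x‖ ^ (-s)) ∂volume) < ⊤ := by
    rcases eq_or_lt_of_le hs0 with h0 | h0
    · simp only [← h0, neg_zero, Real.rpow_zero, ENNReal.ofReal_one, lintegral_one,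
        Measure.restrict_apply_univ]
      exact measure_ball_lt_top
    · exact finite_rpow_ball hn h0 hsn
  refine ⟨volume (ball z r) + ∫⁻ x in ball (0:E) 1, ENNReal.ofReal (‖x‖ ^ (-s)) ∂volume,
    by exact (ENNReal.add_lt_top.2 ⟨measure_ball_lt_top, hC2⟩).ne, fun y => ?_⟩
  have htrans : ∫⁻ x in ball y 1, ENNReal.ofReal (‖x - y‖ ^ (-s)) ∂volume
      = ∫⁻ x in ball (0:E) 1, ENNReal.ofReal (‖x‖ ^ (-s)) ∂volume := by
    have h1 : MeasurePreserving (· + y) (volume : Measure E) volume :=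
      measurePreserving_add_right volume y
    have h2 : MeasurableEmbedding (· + y) := (MeasurableEquiv.addRight y).measurableEmbedding
    have h3 : (· + y) ⁻¹' (ball y 1) = ball (0:E) 1 := by
      ext x; simp [mem_ball, dist_eq_norm]
    rw [← h1.setLIntegral_comp_preimage_emb h2
      (fun x => ENNReal.ofReal (‖x - y‖ ^ (-s))) (ball y 1), h3]
    simp
  calc ∫⁻ x in ball z r, ENNReal.ofReal (‖x - y‖ ^ (-s)) ∂volume
      ≤ ∫⁻ x in (ball z r \ ball y 1) ∪ ball y 1, ENNReal.ofReal (‖x - y‖ ^ (-s)) ∂volume := by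
        refine lintegral_mono_set fun x hx => ?_
        by_cases h : x ∈ ball y 1
        · exact Or.inr h
        · exact Or.inl ⟨hx, h⟩
    _ ≤ (∫⁻ x in ball z r \ ball y 1, ENNReal.ofReal (‖x - y‖ ^ (-s)) ∂volume)
        + ∫⁻ x in ball y 1, ENNReal.ofReal (‖x - y‖ ^ (-s)) ∂volume := lintegral_union_le _ _ _
    _ ≤ volume (ball z r) + ∫⁻ x in ball (0:E) 1, ENNReal.ofReal (‖x‖ ^ (-s)) ∂volume := by
        rw [htrans]
        refine add_le_add_left ?_ _
        calc (∫⁻ x in ball z r \ ball y 1, ENNReal.ofReal (‖x - y‖ ^ (-s)) ∂volume)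
            ≤ ∫⁻ _x in ball z r \ ball y 1, 1 ∂volume := by
              refine setLIntegral_mono' (measurableSet_ball.diff measurableSet_ball)
                fun x hx => ?_
              rw [show (1:ENNReal) = ENNReal.ofReal 1 by simp]
              refine ENNReal.ofReal_le_ofReal ?_
              refine Real.rpow_le_one_of_one_le_of_nonpos ?_ (neg_nonpos.2 hs0)
              have := hx.2
              rw [mem_ball, dist_eq_norm, not_lt] at this
              exact this
          _ = volume (ball z r \ ball y 1) := by rw [setLIntegral_one]
          _ ≤ volume (ball z r) := measure_mono diff_subset


-- joint measurability of the kernel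
lemma meas_kernel (x₀ : E) : Measurable fun p : E × E => Real.log (‖x₀ - p.2‖ / ‖p.1 - p.2‖) :=
  Real.measurable_log.comp (by fun_prop)

lemma meas_param (x₀ : E) (μ' : Measure E) [SFinite μ'] :
    StronglyMeasurable fun x : E => ∫ y, Real.log (‖x₀ - y‖ / ‖x - y‖) ∂μ' := by
  apply StronglyMeasurable.integral_prod_right'
    (f := fun p : E × E => Real.log (‖x₀ - p.2‖ / ‖p.1 - p.2‖))
  exact (meas_kernel x₀).stronglyMeasurable

lemma tendsto_restrict (μ' : Measure E) [IsFiniteMeasure μ'] (f : E → ℝ) (hf : Integrable f μ') :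
    Tendsto (fun k : ℕ => ∫ y, f y ∂(μ'.restrict (ball (0:E) (k:ℝ)))) atTop
      (𝓝 (∫ y, f y ∂μ')) := by
  have h := tendsto_setIntegral_of_monotone (μ := μ') (s := fun k : ℕ => ball (0:E) (k:ℝ))
    (fun k => measurableSet_ball)
    (fun a b hab => ball_subset_ball (by exact_mod_cast hab))
    (by rw [Metric.iUnion_ball_nat]; exact integrableOn_univ.2 hf)
  rwa [Metric.iUnion_ball_nat, setIntegral_univ] at h

lemma jensen_exp {α : Type*} [MeasurableSpace α] (μ : Measure α) [IsProbabilityMeasure μ]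
    (f : α → ℝ) (hf : Integrable f μ) (hef : Integrable (fun x => Real.exp (f x)) μ) :
    Real.exp (∫ x, f x ∂μ) ≤ ∫ x, Real.exp (f x) ∂μ :=
  convexOn_exp.map_integral_le Real.continuous_exp.continuousOn isClosed_univ
    (ae_of_all _ fun _ => mem_univ _) hf hef

lemma integrable_of_ofReal_lt {α : Type*} [MeasurableSpace α] {μ : Measure α} {f : α → ℝ}
    (hm : AEStronglyMeasurable f μ) (h0 : 0 ≤ f)
    (h : ∫⁻ x, ENNReal.ofReal (f x) ∂μ < ⊤) : Integrable f μ := by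
  refine ⟨hm, ?_⟩
  rwa [hasFiniteIntegral_iff_ofReal (ae_of_all _ h0)]

end helpers

set_option maxHeartbeats 2000000 in
/-- With `μ` a finite signed measure of total variation `< 1`, `μ_k = μ|_{B(0,k)}`
and `L̃ν(x) = ∫ log(|x₀−y|/|x−y|) dν(y)`, for every ball `B` one has
`∫_B |e^{n L̃μ_k} − e^{n L̃μ}| → 0` as `k → ∞`. -/
theorem stmt5 (n : ℕ) (hn : 1 ≤ n)
    (μp μm : Measure (EuclideanSpace ℝ (Fin n)))
    [IsFiniteMeasure μp] [IsFiniteMeasure μm]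
    (hmass : μp Set.univ + μm Set.univ < 1)
    (x₀ : EuclideanSpace ℝ (Fin n))
    (hx₀ : ∫⁻ y, ENNReal.ofReal (max (Real.log (1 / ‖x₀ - y‖)) 0) ∂(μp + μm) < ⊤)
    (L : EuclideanSpace ℝ (Fin n) → ℝ)
    (hL : ∀ x, L x = (∫ y, Real.log (‖x₀ - y‖ / ‖x - y‖) ∂μp)
        - ∫ y, Real.log (‖x₀ - y‖ / ‖x - y‖) ∂μm)
    (Lk : ℕ → EuclideanSpace ℝ (Fin n) → ℝ)
    (hLk : ∀ k x, Lk k x =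
        (∫ y, Real.log (‖x₀ - y‖ / ‖x - y‖) ∂(μp.restrict (Metric.ball 0 (k : ℝ))))
        - ∫ y, Real.log (‖x₀ - y‖ / ‖x - y‖) ∂(μm.restrict (Metric.ball 0 (k : ℝ)))) :
    ∀ (z : EuclideanSpace ℝ (Fin n)) (r : ℝ),
      Tendsto (fun k : ℕ => ∫ x in Metric.ball z r,
          |Real.exp ((n : ℝ) * Lk k x) - Real.exp ((n : ℝ) * L x)|)
        atTop (nhds 0) := by
  intro z r
  set ν : Measure (EuclideanSpace ℝ (Fin n)) := μp + μm with hνdef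
  have hμpν : μp ≤ ν := Measure.le_add_right le_rfl
  have hμmν : μm ≤ ν := Measure.le_add_left le_rfl
  set mp := μp Set.univ with hmpdef
  set mm := μm Set.univ with hmmdef
  have hmpt : mp ≠ ⊤ := measure_ne_top μp _
  have hmp1 : mp < 1 := lt_of_le_of_lt le_self_add hmass
  have hmpR1 : mp.toReal < 1 := by
    have := (ENNReal.toReal_lt_toReal hmpt (by simp)).2 hmp1
    simpa using this
  have hn0 : (0:ℝ) < n := by exact_mod_cast hn
  set s' : ℝ := n * mp.toReal with hs'def
  have hs'0 : 0 ≤ s' := by positivity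
  have hs'n : s' < n := by
    calc s' < n * 1 := by
          refine mul_lt_mul_of_pos_left hmpR1 hn0
    _ = n := mul_one _
  set lp : ℝ → ℝ := fun t => max (Real.log (1/t)) 0 with hlpdef
  have hlp0 : ∀ t, 0 ≤ lp t := fun t => le_max_right _ _
  have hlpmeas : Measurable fun p : (EuclideanSpace ℝ (Fin n)) × (EuclideanSpace ℝ (Fin n)) => ENNReal.ofReal (lp ‖p.1 - p.2‖) := by
    apply ENNReal.measurable_ofReal.comp
    exact (Real.measurable_log.comp (by fun_prop)).max measurable_const
  set K :  EuclideanSpace ℝ (Fin n) →  EuclideanSpace ℝ (Fin n) → ℝ := fun x y => Real.log (‖x₀ - y‖ / ‖x - y‖) with hKdef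
  set R : ℝ := max r 0 + ‖z - x₀‖ with hRdef
  have hR0 : 0 ≤ R := by positivity
  set c₁ : ℝ := Real.log (1+R) + Real.log 2 with hc₁def
  have hc₁0 : 0 ≤ c₁ := by
    have h1 : (0:ℝ) ≤ Real.log (1+R) := Real.log_nonneg (by linarith)
    have h2 : (0:ℝ) ≤ Real.log 2 := Real.log_nonneg one_le_two
    linarith
  -- integrability of lp ‖x₀ - ·‖
  have hx₀meas : Measurable fun y : EuclideanSpace ℝ (Fin n) => lp ‖x₀ - y‖ :=
    (Real.measurable_log.comp (by fun_prop)).max measurable_const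
  have hx₀i : ∀ (μ' : Measure (EuclideanSpace ℝ (Fin n))), μ' ≤ ν → Integrable (fun y => lp ‖x₀ - y‖) μ' := by
    intro μ' hle
    refine integrable_of_ofReal_lt (hx₀meas.aestronglyMeasurable) (fun y => hlp0 _) ?_
    exact lt_of_le_of_lt (lintegral_mono' hle le_rfl) hx₀
  have hx₀p := hx₀i μp hμpν
  have hx₀m := hx₀i μm hμmν
  set Im₀ : ℝ := ∫ y, lp ‖x₀ - y‖ ∂μm with hIm₀def
  have hIm₀0 : 0 ≤ Im₀ := integral_nonneg (fun y => hlp0 _)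
  set c : ℝ := c₁ * (mp.toReal + mm.toReal) + Im₀ with hcdef
  set G :  EuclideanSpace ℝ (Fin n) → ENNReal := fun x => ∫⁻ y, (1 + ENNReal.ofReal (‖x - y‖ ^ (-s'))) ∂μp with hGdef
  have hGmeas : Measurable G := by
    apply Measurable.lintegral_prod_right'
      (f := fun p : (EuclideanSpace ℝ (Fin n)) × (EuclideanSpace ℝ (Fin n)) => 1 + ENNReal.ofReal (‖p.1 - p.2‖ ^ (-s')))
    exact measurable_const.add (ENNReal.measurable_ofReal.comp (by fun_prop))
  set bound :  EuclideanSpace ℝ (Fin n) → ℝ := fun x => 2 * Real.exp (n*c) * max ((mp⁻¹ * G x).toReal) 1 with hbounddef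
  have hbound0 : ∀ x, 0 ≤ bound x := by
    intro x
    have : (0:ℝ) ≤ max ((mp⁻¹ * G x).toReal) 1 := le_trans zero_le_one (le_max_right _ _)
    positivity
  obtain ⟨C₁, hC₁t, hC₁⟩ := uniform_rpow_ball hn (by norm_num : (0:ℝ) ≤ 2⁻¹)
    (by have h7 : (1:ℝ) ≤ n := by exact_mod_cast hn
        linarith : (2⁻¹:ℝ) < n) z r
  obtain ⟨C₂, hC₂t, hC₂⟩ := uniform_rpow_ball hn hs'0 hs'n z r
  have hvolB : volume (ball z r) < ⊤ := measure_ball_lt_top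
  -- Tonelli: the local log-potential is a.e. finite on B
  have hW1m : Measurable fun x : EuclideanSpace ℝ (Fin n) => ∫⁻ y, ENNReal.ofReal (lp ‖x - y‖) ∂ν :=
    Measurable.lintegral_prod_right' hlpmeas
  have hW1fin : (∫⁻ x in ball z r, (∫⁻ y, ENNReal.ofReal (lp ‖x - y‖) ∂ν) ∂volume) < ⊤ := by
    rw [lintegral_lintegral_swap hlpmeas.aemeasurable]
    calc (∫⁻ y, (∫⁻ x in ball z r, ENNReal.ofReal (lp ‖x - y‖) ∂volume) ∂ν)
        ≤ ∫⁻ _y, ENNReal.ofReal 2 * C₁ ∂ν := by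
          refine lintegral_mono fun y => ?_
          calc (∫⁻ x in ball z r, ENNReal.ofReal (lp ‖x - y‖) ∂volume)
              ≤ ∫⁻ x in ball z r, ENNReal.ofReal 2 * ENNReal.ofReal (‖x - y‖ ^ (-2⁻¹ : ℝ))
                ∂volume := by
                refine lintegral_mono fun x => ?_
                rw [← ENNReal.ofReal_mul (by norm_num)]
                refine ENNReal.ofReal_le_ofReal ?_
                have h8 := logplus_le_rpow ‖x - y‖ (norm_nonneg _) (by norm_num : (0:ℝ) < 2⁻¹)
                have h9 : ((2:ℝ)⁻¹)⁻¹ = (2:ℝ) := by norm_num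
                rw [h9] at h8
                simp only [hlpdef]
                exact h8
            _ = ENNReal.ofReal 2 * ∫⁻ x in ball z r, ENNReal.ofReal (‖x - y‖ ^ (-2⁻¹ : ℝ))
                ∂volume := lintegral_const_mul' _ _ ENNReal.ofReal_ne_top
            _ ≤ ENNReal.ofReal 2 * C₁ := mul_le_mul_right (hC₁ y) _
      _ = ENNReal.ofReal 2 * C₁ * ν univ := lintegral_const _
      _ < ⊤ := ENNReal.mul_lt_top (ENNReal.mul_lt_top ENNReal.ofReal_lt_top
          hC₁t.lt_top) (measure_lt_top ν _)
  have hW1ae : ∀ᵐ x ∂(volume.restrict (ball z r)),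
      (∫⁻ y, ENNReal.ofReal (lp ‖x - y‖) ∂ν) < ⊤ := ae_lt_top hW1m hW1fin.ne
  -- Tonelli for G
  have hGB : (∫⁻ x in ball z r, G x ∂volume) ≤ (volume (ball z r) + C₂) * mp := by
    have hjm : Measurable fun p : (EuclideanSpace ℝ (Fin n)) × (EuclideanSpace ℝ (Fin n)) =>
        1 + ENNReal.ofReal (‖p.1 - p.2‖ ^ (-s')) :=
      measurable_const.add (ENNReal.measurable_ofReal.comp (by fun_prop))
    rw [hGdef]
    rw [lintegral_lintegral_swap hjm.aemeasurable]
    calc (∫⁻ y, (∫⁻ x in ball z r, (1 + ENNReal.ofReal (‖x - y‖ ^ (-s'))) ∂volume) ∂μp)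
        ≤ ∫⁻ _y, (volume (ball z r) + C₂) ∂μp := by
          refine lintegral_mono fun y => ?_
          calc (∫⁻ x in ball z r, (1 + ENNReal.ofReal (‖x - y‖ ^ (-s'))) ∂volume)
              = volume (ball z r) + ∫⁻ x in ball z r, ENNReal.ofReal (‖x - y‖ ^ (-s'))
                ∂volume := by
                rw [lintegral_add_left measurable_const, setLIntegral_one]
            _ ≤ volume (ball z r) + C₂ := add_le_add_right (hC₂ y) _
      _ = (volume (ball z r) + C₂) * mp := lintegral_const _
  have hGBfin : (∫⁻ x in ball z r, G x ∂volume) < ⊤ :=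
    lt_of_le_of_lt hGB (ENNReal.mul_lt_top (ENNReal.add_lt_top.2
      ⟨hvolB, hC₂t.lt_top⟩) hmpt.lt_top)
  have hW2ae : ∀ᵐ x ∂(volume.restrict (ball z r)), G x < ⊤ := ae_lt_top hGmeas hGBfin.ne
  -- bound is integrable on B
  have hbmeas : Measurable bound := by
    refine (measurable_const.mul ?_)
    exact (hGmeas.const_mul _).ennreal_toReal.max measurable_const
  have hkey : mp⁻¹ * ∫⁻ x in ball z r, G x ∂volume ≤ volume (ball z r) + C₂ := by
    rcases eq_or_ne mp 0 with h|h
    · have h0 : (∫⁻ x in ball z r, G x ∂volume) = 0 :=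
        le_antisymm (by simpa [h] using hGB) zero_le
      simp [h0]
    · calc mp⁻¹ * ∫⁻ x in ball z r, G x ∂volume
          ≤ mp⁻¹ * ((volume (ball z r) + C₂) * mp) := mul_le_mul_right hGB _
        _ = (mp⁻¹ * mp) * (volume (ball z r) + C₂) := by ring
        _ = 1 * (volume (ball z r) + C₂) := by rw [ENNReal.inv_mul_cancel h hmpt]
        _ = _ := one_mul _
  have hbint : Integrable bound (volume.restrict (ball z r)) := by
    refine integrable_of_ofReal_lt hbmeas.aestronglyMeasurable (fun x => hbound0 x) ?_
    calc (∫⁻ x, ENNReal.ofReal (bound x) ∂(volume.restrict (ball z r)))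
        ≤ ∫⁻ x in ball z r, ENNReal.ofReal (2 * Real.exp (n*c)) * (mp⁻¹ * G x + 1) ∂volume := by
          refine lintegral_mono fun x => ?_
          rw [hbounddef]
          simp only
          rw [ENNReal.ofReal_mul (by positivity)]
          refine mul_le_mul_right ?_ _
          calc ENNReal.ofReal (max ((mp⁻¹ * G x).toReal) 1)
              ≤ ENNReal.ofReal ((mp⁻¹ * G x).toReal + 1) := ENNReal.ofReal_le_ofReal
                (max_le (by linarith [ENNReal.toReal_nonneg (a := mp⁻¹ * G x)])
                  (by linarith [ENNReal.toReal_nonneg (a := mp⁻¹ * G x)]))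
            _ = ENNReal.ofReal ((mp⁻¹ * G x).toReal) + 1 := by
                rw [ENNReal.ofReal_add ENNReal.toReal_nonneg zero_le_one, ENNReal.ofReal_one]
            _ ≤ mp⁻¹ * G x + 1 := add_le_add_left ENNReal.ofReal_toReal_le _
      _ = ENNReal.ofReal (2 * Real.exp (n*c)) *
          ∫⁻ x in ball z r, (mp⁻¹ * G x + 1) ∂volume :=
            lintegral_const_mul' _ _ ENNReal.ofReal_ne_top
      _ = ENNReal.ofReal (2 * Real.exp (n*c)) *
          ((mp⁻¹ * ∫⁻ x in ball z r, G x ∂volume) + volume (ball z r)) := by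
            rw [lintegral_add_right _ measurable_const, setLIntegral_one,
              lintegral_const_mul _ hGmeas]
      _ ≤ ENNReal.ofReal (2 * Real.exp (n*c)) *
          ((volume (ball z r) + C₂) + volume (ball z r)) := by
            exact mul_le_mul_right (add_le_add_left hkey _) _
      _ < ⊤ := ENNReal.mul_lt_top ENNReal.ofReal_lt_top
          (ENNReal.add_lt_top.2 ⟨ENNReal.add_lt_top.2 ⟨hvolB, hC₂t.lt_top⟩, hvolB⟩)
  -- measurability of the integrands
  have hLeq : L = fun x => (∫ y, K x y ∂μp) - ∫ y, K x y ∂μm := funext hL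
  have hLkeq : ∀ k, Lk k = fun x => (∫ y, K x y ∂(μp.restrict (ball (0:EuclideanSpace ℝ (Fin n)) (k:ℝ))))
      - ∫ y, K x y ∂(μm.restrict (ball (0:EuclideanSpace ℝ (Fin n)) (k:ℝ))) := fun k => funext (hLk k)
  have hLmeas : StronglyMeasurable L := by
    rw [hLeq]; exact (meas_param x₀ μp).sub (meas_param x₀ μm)
  have hLkmeas : ∀ k, StronglyMeasurable (Lk k) := by
    intro k
    rw [hLkeq k]
    exact (meas_param x₀ _).sub (meas_param x₀ _)
  have hFmeas : ∀ k, AEStronglyMeasurable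
      (fun x => |Real.exp ((n : ℝ) * Lk k x) - Real.exp ((n : ℝ) * L x)|)
      (volume.restrict (ball z r)) := by
    intro k
    refine (continuous_abs.comp_stronglyMeasurable ?_).aestronglyMeasurable
    exact (Real.continuous_exp.comp_stronglyMeasurable (stronglyMeasurable_const.mul
        (hLkmeas k))).sub
      (Real.continuous_exp.comp_stronglyMeasurable (stronglyMeasurable_const.mul hLmeas))
  -- the main pointwise facts
  have hmain : ∀ᵐ x ∂(volume.restrict (ball z r)),
      Tendsto (fun k => |Real.exp ((n : ℝ) * Lk k x) - Real.exp ((n : ℝ) * L x)|) atTop (𝓝 0)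
      ∧ ∀ k, |Real.exp ((n : ℝ) * Lk k x) - Real.exp ((n : ℝ) * L x)| ≤ bound x := by
    filter_upwards [hW1ae, hW2ae, self_mem_ae_restrict measurableSet_ball] with x hW1 hW2 hxB
    -- basic facts about this x
    have hdist : ‖x₀ - x‖ ≤ R := by
      rw [norm_sub_rev]
      calc ‖x - x₀‖ ≤ ‖x - z‖ + ‖z - x₀‖ := norm_sub_le_norm_sub_add_norm_sub x z x₀
      _ ≤ max r 0 + ‖z - x₀‖ := by
          have h5 := mem_ball.1 hxB
          rw [dist_eq_norm] at h5
          have h6 : ‖x - z‖ ≤ max r 0 := le_max_of_le_left h5.le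
          linarith
    have hKle : ∀ y, K x y ≤ c₁ + lp ‖x - y‖ := by
      intro y
      have h := log_div_le (norm_nonneg (x₀ - y)) (norm_nonneg (x - y))
        (norm_nonneg (x₀ - x)) (by
          have := norm_sub_le_norm_sub_add_norm_sub x₀ x y
          linarith)
      refine h.trans ?_
      have : Real.log (1 + ‖x₀ - x‖) ≤ Real.log (1 + R) :=
        Real.log_le_log (by positivity) (by linarith)
      simp only [hc₁def, hlpdef]
      linarith
    have hKge : ∀ y, -K x y ≤ c₁ + lp ‖x₀ - y‖ := by
      intro y
      have hrw : -K x y = Real.log (‖x - y‖ / ‖x₀ - y‖) := by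
        rw [hKdef, ← Real.log_inv, inv_div]
      rw [hrw]
      have h := log_div_le (norm_nonneg (x - y)) (norm_nonneg (x₀ - y))
        (norm_nonneg (x - x₀)) (by
          have := norm_sub_le_norm_sub_add_norm_sub x x₀ y
          linarith)
      refine h.trans ?_
      have h2 : Real.log (1 + ‖x - x₀‖) ≤ Real.log (1 + R) := by
        refine Real.log_le_log (by positivity) ?_
        rw [norm_sub_rev] at hdist; linarith
      simp only [hc₁def, hlpdef]
      linarith
    have hKabs : ∀ y, |K x y| ≤ c₁ + lp ‖x - y‖ + lp ‖x₀ - y‖ := by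
      intro y
      rw [abs_le]
      constructor
      · have := hKge y; have := hlp0 ‖x - y‖; linarith
      · have := hKle y; have := hlp0 ‖x₀ - y‖; linarith
    -- integrability of lp ‖x - ·‖
    have hlpx : ∀ (μ' : Measure (EuclideanSpace ℝ (Fin n))), μ' ≤ ν → Integrable (fun y => lp ‖x - y‖) μ' := by
      intro μ' hle
      refine integrable_of_ofReal_lt
        (((Real.measurable_log.comp (by fun_prop)).max measurable_const).aestronglyMeasurable)
        (fun y => hlp0 _) (lt_of_le_of_lt (lintegral_mono' hle le_rfl) hW1)
    have hlpxp := hlpx μp hμpν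
    have hlpxm := hlpx μm hμmν
    have hKmeasx : ∀ (μ' : Measure (EuclideanSpace ℝ (Fin n))), AEStronglyMeasurable (K x) μ' := by
      intro μ'
      exact ((meas_kernel x₀).comp (measurable_prodMk_left)).aestronglyMeasurable
    have hKint : ∀ (μ' : Measure (EuclideanSpace ℝ (Fin n))), μ' ≤ ν → Integrable (K x) μ' := by
      intro μ' hle
      haveI : IsFiniteMeasure μ' :=
        ⟨lt_of_le_of_lt (Measure.le_iff'.1 hle Set.univ) (measure_lt_top ν _)⟩
      refine Integrable.mono' (((hx₀i μ' hle).add (hlpx μ' hle)).add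
        (integrable_const c₁)) (hKmeasx μ') (ae_of_all _ fun y => ?_)
      rw [Real.norm_eq_abs]
      have := hKabs y
      simp only [Pi.add_apply]
      linarith
    have hKintp := hKint μp hμpν
    have hKintm := hKint μm hμmν
    constructor
    · -- convergence
      have t1 := tendsto_restrict μp (K x) hKintp
      have t2 := tendsto_restrict μm (K x) hKintm
      have hLtend : Tendsto (fun k => Lk k x) atTop (𝓝 (L x)) := by
        rw [hL]
        simp only [hLk]
        exact t1.sub t2
      have h1 : Tendsto (fun k => Real.exp ((n:ℝ) * Lk k x)) atTop
          (𝓝 (Real.exp ((n:ℝ) * L x))) := by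
        have := (Real.continuous_exp.tendsto _).comp (hLtend.const_mul ((n:ℝ)))
        exact this
      have := (h1.sub (tendsto_const_nhds
        (x := Real.exp ((n:ℝ) * L x)))).abs
      simpa using this
    · -- domination
      have hQint := hlpxp
      have hφint : Integrable (fun y => c₁ + lp ‖x - y‖) μp := (integrable_const _).add hlpxp
      have hψint : Integrable (fun y => c₁ + lp ‖x₀ - y‖) μm := (integrable_const _).add hx₀m
      have hφ0 : ∀ y, 0 ≤ c₁ + lp ‖x - y‖ := fun y => by have := hlp0 ‖x - y‖; linarith
      have hψ0 : ∀ y, 0 ≤ c₁ + lp ‖x₀ - y‖ := fun y => by have := hlp0 ‖x₀ - y‖; linarith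
      have hφval : ∫ y, (c₁ + lp ‖x - y‖) ∂μp = c₁ * mp.toReal + ∫ y, lp ‖x - y‖ ∂μp := by
        rw [integral_add (integrable_const _) hlpxp, integral_const, smul_eq_mul, mul_comm]; rfl
      have hψval : ∫ y, (c₁ + lp ‖x₀ - y‖) ∂μm = c₁ * mm.toReal + Im₀ := by
        rw [integral_add (integrable_const _) hx₀m, integral_const, smul_eq_mul, mul_comm]; rfl
      have hmmR0 : 0 ≤ mm.toReal := ENNReal.toReal_nonneg
      have hmpR0 : 0 ≤ mp.toReal := ENNReal.toReal_nonneg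
      -- upper bounds for L and Lk
      have hLle : L x ≤ c + ∫ y, lp ‖x - y‖ ∂μp := by
        have h1 : ∫ y, K x y ∂μp ≤ c₁ * mp.toReal + ∫ y, lp ‖x - y‖ ∂μp := by
          rw [← hφval]
          exact integral_mono hKintp hφint fun y => hKle y
        have h2 : -∫ y, K x y ∂μm ≤ c₁ * mm.toReal + Im₀ := by
          rw [← hψval, ← integral_neg]
          exact integral_mono hKintm.neg hψint fun y => hKge y
        rw [hL x, hcdef]
        have h3 : (∫ y, K x y ∂μp) = ∫ y, Real.log (‖x₀ - y‖ / ‖x - y‖) ∂μp := rfl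
        have h4 : (∫ y, K x y ∂μm) = ∫ y, Real.log (‖x₀ - y‖ / ‖x - y‖) ∂μm := rfl
        rw [← h3, ← h4]
        linarith
      have hLkle : ∀ k : ℕ, Lk k x ≤ c + ∫ y, lp ‖x - y‖ ∂μp := by
        intro k
        have h1 : ∫ y, K x y ∂(μp.restrict (ball (0:EuclideanSpace ℝ (Fin n)) (k:ℝ)))
            ≤ c₁ * mp.toReal + ∫ y, lp ‖x - y‖ ∂μp := by
          rw [← hφval]
          calc ∫ y, K x y ∂(μp.restrict (ball (0:EuclideanSpace ℝ (Fin n)) (k:ℝ)))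
              ≤ ∫ y, (c₁ + lp ‖x - y‖) ∂(μp.restrict (ball (0:EuclideanSpace ℝ (Fin n)) (k:ℝ))) :=
                integral_mono hKintp.restrict hφint.restrict fun y => hKle y
            _ ≤ ∫ y, (c₁ + lp ‖x - y‖) ∂μp :=
                integral_mono_measure Measure.restrict_le_self (ae_of_all _ hφ0) hφint
        have h2 : -∫ y, K x y ∂(μm.restrict (ball (0:EuclideanSpace ℝ (Fin n)) (k:ℝ)))
            ≤ c₁ * mm.toReal + Im₀ := by
          rw [← hψval, ← integral_neg]
          calc ∫ y, -K x y ∂(μm.restrict (ball (0:EuclideanSpace ℝ (Fin n)) (k:ℝ)))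
              ≤ ∫ y, (c₁ + lp ‖x₀ - y‖) ∂(μm.restrict (ball (0:EuclideanSpace ℝ (Fin n)) (k:ℝ))) :=
                integral_mono hKintm.neg.restrict
                  ((integrable_const _).add hx₀m).restrict fun y => hKge y
            _ ≤ ∫ y, (c₁ + lp ‖x₀ - y‖) ∂μm :=
                integral_mono_measure Measure.restrict_le_self (ae_of_all _ hψ0) hψint
        rw [hLk k x, hcdef]
        have h3 : (∫ y, K x y ∂(μp.restrict (ball (0:EuclideanSpace ℝ (Fin n)) (k:ℝ))))
            = ∫ y, Real.log (‖x₀ - y‖ / ‖x - y‖) ∂(μp.restrict (ball 0 (k:ℝ))) := rfl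
        have h4 : (∫ y, K x y ∂(μm.restrict (ball (0:EuclideanSpace ℝ (Fin n)) (k:ℝ))))
            = ∫ y, Real.log (‖x₀ - y‖ / ‖x - y‖) ∂(μm.restrict (ball 0 (k:ℝ))) := rfl
        rw [← h3, ← h4]
        linarith
      -- Jensen step
      have hexpQ : Real.exp (n * ∫ y, lp ‖x - y‖ ∂μp) ≤ max ((mp⁻¹ * G x).toReal) 1 := by
        rcases eq_or_ne mp 0 with h|h
        · have hμp0 : μp = 0 := by
            rwa [hmpdef, Measure.measure_univ_eq_zero] at h
          have hQ0 : ∫ y, lp ‖x - y‖ ∂μp = 0 := by rw [hμp0, integral_zero_measure]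
          rw [hQ0, mul_zero, Real.exp_zero]
          exact le_max_right _ _
        · set P : Measure (EuclideanSpace ℝ (Fin n)) := mp⁻¹ • μp with hPdef
          haveI hPP : IsProbabilityMeasure P :=
            ⟨by rw [hPdef, Measure.smul_apply, smul_eq_mul, ← hmpdef,
              ENNReal.inv_mul_cancel h hmpt]⟩
          set f : EuclideanSpace ℝ (Fin n) → ℝ := fun y => s' * lp ‖x - y‖ with hfdef
          have hfmeas : Measurable f := by
            refine measurable_const.mul ?_
            exact (Real.measurable_log.comp (by fun_prop)).max measurable_const
          have hf0 : ∀ y, 0 ≤ f y := fun y => mul_nonneg hs'0 (hlp0 _)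
          have hinvt : mp⁻¹ ≠ ⊤ := by
            simp [ENNReal.inv_ne_top, h]
          have hGP : ∫⁻ y, ENNReal.ofReal (Real.exp (f y)) ∂P ≤ mp⁻¹ * G x := by
            rw [hPdef, lintegral_smul_measure]
            refine mul_le_mul_right (le_trans (lintegral_mono fun y => ?_) le_rfl) _
            have h5 := exp_logplus_le ‖x - y‖ (norm_nonneg _) hs'0
            calc ENNReal.ofReal (Real.exp (f y))
                ≤ ENNReal.ofReal (1 + ‖x - y‖ ^ (-s')) := by
                  refine ENNReal.ofReal_le_ofReal ?_
                  simpa [hfdef, hlpdef] using h5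
              _ = 1 + ENNReal.ofReal (‖x - y‖ ^ (-s')) := by
                  rw [ENNReal.ofReal_add zero_le_one (Real.rpow_nonneg (norm_nonneg _) _),
                    ENNReal.ofReal_one]
          have hGPfin : (∫⁻ y, ENNReal.ofReal (Real.exp (f y)) ∂P) < ⊤ :=
            lt_of_le_of_lt hGP (ENNReal.mul_lt_top hinvt.lt_top hW2)
          have hefint : Integrable (fun y => Real.exp (f y)) P :=
            integrable_of_ofReal_lt ((Real.measurable_exp.comp hfmeas).aestronglyMeasurable)
              (fun y => (Real.exp_pos _).le) hGPfin
          have hfint : Integrable f P := by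
            refine hefint.mono' hfmeas.aestronglyMeasurable (ae_of_all _ fun y => ?_)
            rw [Real.norm_eq_abs, abs_of_nonneg (hf0 y)]
            have := Real.add_one_le_exp (f y)
            linarith
          have hjen := jensen_exp P f hfint hefint
          have hmpRne : mp.toReal ≠ 0 := ENNReal.toReal_ne_zero.2 ⟨h, hmpt⟩
          have hfP : ∫ y, f y ∂P = n * ∫ y, lp ‖x - y‖ ∂μp := by
            rw [hPdef, integral_smul_measure, hfdef]
            rw [integral_const_mul, ENNReal.toReal_inv, smul_eq_mul, hs'def]
            field_simp
          have hintexp : ∫ y, Real.exp (f y) ∂P ≤ (mp⁻¹ * G x).toReal := by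
            rw [integral_eq_lintegral_of_nonneg_ae (ae_of_all _ fun y => (Real.exp_pos (f y)).le)
              ((Real.measurable_exp.comp hfmeas).aestronglyMeasurable)]
            exact ENNReal.toReal_mono (ENNReal.mul_ne_top hinvt hW2.ne) hGP
          calc Real.exp (n * ∫ y, lp ‖x - y‖ ∂μp) = Real.exp (∫ y, f y ∂P) := by rw [hfP]
            _ ≤ ∫ y, Real.exp (f y) ∂P := hjen
            _ ≤ (mp⁻¹ * G x).toReal := hintexp
            _ ≤ max ((mp⁻¹ * G x).toReal) 1 := le_max_left _ _
      -- conclude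
      intro k
      have hn0' : (0:ℝ) ≤ n := hn0.le
      have hexpc : (0:ℝ) < Real.exp (n * c) := Real.exp_pos _
      have hA : Real.exp ((n:ℝ) * Lk k x) ≤ Real.exp (n*c) * max ((mp⁻¹ * G x).toReal) 1 := by
        calc Real.exp ((n:ℝ) * Lk k x)
            ≤ Real.exp ((n:ℝ) * (c + ∫ y, lp ‖x - y‖ ∂μp)) :=
              Real.exp_le_exp.2 (mul_le_mul_of_nonneg_left (hLkle k) hn0')
          _ = Real.exp (n*c) * Real.exp (n * ∫ y, lp ‖x - y‖ ∂μp) := by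
              rw [mul_add, Real.exp_add]
          _ ≤ _ := mul_le_mul_of_nonneg_left hexpQ hexpc.le
      have hB : Real.exp ((n:ℝ) * L x) ≤ Real.exp (n*c) * max ((mp⁻¹ * G x).toReal) 1 := by
        calc Real.exp ((n:ℝ) * L x)
            ≤ Real.exp ((n:ℝ) * (c + ∫ y, lp ‖x - y‖ ∂μp)) :=
              Real.exp_le_exp.2 (mul_le_mul_of_nonneg_left hLle hn0')
          _ = Real.exp (n*c) * Real.exp (n * ∫ y, lp ‖x - y‖ ∂μp) := by
              rw [mul_add, Real.exp_add]
          _ ≤ _ := mul_le_mul_of_nonneg_left hexpQ hexpc.le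
      have hbx : bound x = 2 * Real.exp (n*c) * max ((mp⁻¹ * G x).toReal) 1 := rfl
      have habs := abs_sub (Real.exp ((n:ℝ) * Lk k x)) (Real.exp ((n:ℝ) * L x))
      have hApos := (Real.exp_pos ((n:ℝ) * Lk k x)).le
      have hBpos := (Real.exp_pos ((n:ℝ) * L x)).le
      rw [hbx]
      rw [abs_of_nonneg hApos, abs_of_nonneg hBpos] at habs
      nlinarith [hA, hB]
  have hdom : ∀ (k:ℕ), ∀ᵐ x ∂(volume.restrict (ball z r)),
      ‖|Real.exp ((n : ℝ) * Lk k x) - Real.exp ((n : ℝ) * L x)|‖ ≤ bound x := by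
    intro k
    filter_upwards [hmain] with x hx
    rw [Real.norm_eq_abs, abs_abs]
    exact hx.2 k
  have hlim : ∀ᵐ x ∂(volume.restrict (ball z r)),
      Tendsto (fun k => |Real.exp ((n : ℝ) * Lk k x) - Real.exp ((n : ℝ) * L x)|) atTop
        (𝓝 ((fun _ => (0:ℝ)) x)) := by
    filter_upwards [hmain] with x hx
    exact hx.1
  have := tendsto_integral_of_dominated_convergence bound hFmeas hbint hdom hlim
  simpa using this

end
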